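/- Let U and V be jointly distributed random variables on finite sets. There exists a random variable W (on some finite set) such that (1) U − V − W form a Markov chain, (2) U and W are independent, and (3) V and W are not independent, if and only if U is weakly independent of V, i.e., the rows of the stochastic matrix [p_{U|V}(u|v)]_{v,u} are linearly dependent. -/

import Mathlib

set_option linter.unusedSectionVars false
set_option linter.unnecessarySeqFocus false
set_option maxHeartbeats 1000000


open scoped BigOperators

namespace MDC

structure FinProb (Ω : Type*) [Fintype Ω] where
  μ : Ω → ℝ
  nonneg : ∀ ω, 0 ≤ μ ω
  sum_one : ∑ ω, μ ω = 1

variable {Ω : Type*} [Fintype Ω]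

/-- Probability that the random variable `f` takes the value `a`. -/
noncomputable def pr (P : FinProb Ω) {A : Type*} [DecidableEq A] (f : Ω → A) (a : A) : ℝ :=
  ∑ ω, if f ω = a then P.μ ω else 0

/-- Shannon entropy (base 2) of a finite random variable. -/
noncomputable def H (P : FinProb Ω) {A : Type*} [Fintype A] [DecidableEq A] (f : Ω → A) : ℝ :=
  - ∑ a, pr P f a * Real.logb 2 (pr P f a)

/-- Conditional entropy H(f|g). -/
noncomputable def Hcond (P : FinProb Ω) {A B : Type*} [Fintype A] [DecidableEq A]
    [Fintype B] [DecidableEq B] (f : Ω → A) (g : Ω → B) : ℝ :=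
  H P (fun ω => (f ω, g ω)) - H P g

/-- Mutual information I(f;g). -/
noncomputable def MI (P : FinProb Ω) {A B : Type*} [Fintype A] [DecidableEq A]
    [Fintype B] [DecidableEq B] (f : Ω → A) (g : Ω → B) : ℝ :=
  H P f + H P g - H P (fun ω => (f ω, g ω))

/-- Conditional mutual information I(f;g|h). -/
noncomputable def CMI (P : FinProb Ω) {A B C : Type*} [Fintype A] [DecidableEq A]
    [Fintype B] [DecidableEq B] [Fintype C] [DecidableEq C]
    (f : Ω → A) (g : Ω → B) (h : Ω → C) : ℝ :=
  H P (fun ω => (f ω, h ω)) + H P (fun ω => (g ω, h ω))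
    - H P (fun ω => (f ω, g ω, h ω)) - H P h

/-- Independence of two finite random variables. -/
def Indep (P : FinProb Ω) {A B : Type*} [DecidableEq A] [DecidableEq B]
    (f : Ω → A) (g : Ω → B) : Prop :=
  ∀ a b, pr P (fun ω => (f ω, g ω)) (a, b) = pr P f a * pr P g b

/-- Conditional independence of `f` and `g` given `h` (a Markov chain f − h − g). -/
def CondIndep (P : FinProb Ω) {A B C : Type*} [DecidableEq A] [DecidableEq B] [DecidableEq C]
    (f : Ω → A) (g : Ω → B) (h : Ω → C) : Prop :=
  ∀ a b c, pr P h c * pr P (fun ω => (f ω, g ω, h ω)) (a, b, c) =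
    pr P (fun ω => (f ω, h ω)) (a, c) * pr P (fun ω => (g ω, h ω)) (b, c)

/-- Binary entropy function. -/
noncomputable def Hb (p : ℝ) : ℝ := -(p * Real.logb 2 p) - (1 - p) * Real.logb 2 (1 - p)

/-- Expected Hamming distortion between two random variables. -/
noncomputable def Edist (P : FinProb Ω) {A : Type*} [DecidableEq A] (f g : Ω → A) : ℝ :=
  ∑ ω, P.μ ω * (if f ω = g ω then 0 else 1)

end MDC

open MDC

section AuxLemmas
variable {Ω : Type*} [Fintype Ω] {A B C : Type*} [Fintype A] [DecidableEq A]
  [Fintype B] [DecidableEq B] [Fintype C] [DecidableEq C]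

lemma pr_nonneg (P : FinProb Ω) (f : Ω → A) (a : A) : 0 ≤ pr P f a :=
  Finset.sum_nonneg fun ω _ => by split <;> simp [P.nonneg ω]

lemma sum_pr (P : FinProb Ω) (f : Ω → A) : ∑ a, pr P f a = 1 := by
  unfold pr
  rw [Finset.sum_comm]
  simp [Finset.sum_ite_eq', P.sum_one]

lemma sum_pr_snd (P : FinProb Ω) (f : Ω → A) (g : Ω → B) (a : A) :
    ∑ b, pr P (fun ω => (f ω, g ω)) (a, b) = pr P f a := by
  unfold pr
  rw [Finset.sum_comm]
  refine Finset.sum_congr rfl fun ω _ => ?_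
  by_cases h : f ω = a <;> simp [Prod.ext_iff, h, Finset.sum_ite_eq']

lemma sum_pr_fst (P : FinProb Ω) (f : Ω → A) (g : Ω → B) (b : B) :
    ∑ a, pr P (fun ω => (f ω, g ω)) (a, b) = pr P g b := by
  unfold pr
  rw [Finset.sum_comm]
  refine Finset.sum_congr rfl fun ω _ => ?_
  by_cases h : g ω = b <;> simp [Prod.ext_iff, h, Finset.sum_ite_eq']

lemma sum_pr_third (P : FinProb Ω) (f : Ω → A) (g : Ω → B) (h : Ω → C) (a : A) (b : B) :
    ∑ c, pr P (fun ω => (f ω, g ω, h ω)) (a, b, c) = pr P (fun ω => (f ω, g ω)) (a, b) := by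
  unfold pr
  rw [Finset.sum_comm]
  refine Finset.sum_congr rfl fun ω _ => ?_
  by_cases h1 : f ω = a <;> by_cases h2 : g ω = b <;>
    simp [Prod.ext_iff, h1, h2, Finset.sum_ite_eq']

lemma pr_pair_le_snd (P : FinProb Ω) (f : Ω → A) (g : Ω → B) (a : A) (b : B) :
    pr P (fun ω => (f ω, g ω)) (a, b) ≤ pr P g b := by
  refine Finset.sum_le_sum fun ω _ => ?_
  dsimp only
  by_cases h : g ω = b <;> simp [Prod.ext_iff, h, P.nonneg ω] <;> split <;> simp [P.nonneg ω]

lemma pr_triple_le_third (P : FinProb Ω) (f : Ω → A) (g : Ω → B) (h : Ω → C)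
    (a : A) (b : B) (c : C) :
    pr P (fun ω => (f ω, g ω, h ω)) (a, b, c) ≤ pr P h c := by
  refine Finset.sum_le_sum fun ω _ => ?_
  dsimp only
  by_cases h1 : h ω = c <;> simp [Prod.ext_iff, h1, P.nonneg ω] <;> split <;>
    simp [P.nonneg ω]

lemma pr_swap (P : FinProb Ω) (f : Ω → A) (g : Ω → B) (a : A) (b : B) :
    pr P (fun ω => (f ω, g ω)) (a, b) = pr P (fun ω => (g ω, f ω)) (b, a) := by
  unfold pr
  refine Finset.sum_congr rfl fun ω _ => ?_
  simp [Prod.ext_iff, and_comm]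



lemma sum_subtype_of_zero {V : Type*} [Fintype V] (pred : V → Prop) [DecidablePred pred]
    (F : V → ℝ) (h0 : ∀ v, ¬ pred v → F v = 0) :
    ∑ i : {v // pred v}, F i.1 = ∑ v, F v := by
  rw [← Finset.sum_subtype (Finset.univ.filter pred) (by simp) F]
  exact Finset.sum_filter_of_ne fun v _ hne => by
    by_contra h; exact hne (h0 v h)

lemma forward {Ω U V : Type} [Fintype Ω] [Fintype U] [DecidableEq U]
    [Fintype V] [DecidableEq V] (P : FinProb Ω) (Ur : Ω → U) (Vr : Ω → V)
    {n m : ℕ} (P' : FinProb (Fin n)) (U' : Fin n → U) (V' : Fin n → V) (W' : Fin n → Fin m)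
    (hUV : ∀ u v, pr P' (fun ω => (U' ω, V' ω)) (u, v) = pr P (fun ω => (Ur ω, Vr ω)) (u, v))
    (hM : CondIndep P' U' W' V') (hI : Indep P' U' W')
    (hLI : LinearIndependent ℝ (fun v : {v : V // pr P Vr v ≠ 0} =>
        fun u : U => pr P (fun ω => (Ur ω, Vr ω)) (u, v.1) / pr P Vr v.1)) :
    Indep P' V' W' := by
  have hq : ∀ v, pr P' V' v = pr P Vr v := fun v => by
    rw [← sum_pr_fst P' U' V' v, ← sum_pr_fst P Ur Vr v]
    exact Finset.sum_congr rfl fun u _ => hUV u v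
  have hu : ∀ u, pr P' U' u = pr P Ur u := fun u => by
    rw [← sum_pr_snd P' U' V' u, ← sum_pr_snd P Ur Vr u]
    exact Finset.sum_congr rfl fun v _ => hUV u v
  rw [Fintype.linearIndependent_iff] at hLI
  -- main claim: for each w and v with pr Vr v ≠ 0, pr (W',V') (w,v) = pr Vr v * pr W' w
  have key : ∀ (w : Fin m) (v : V),
      pr P' (fun ω => (W' ω, V' ω)) (w, v) = pr P Vr v * pr P' W' w := by
    intro w v
    have hg := hLI (fun i => pr P' (fun ω => (W' ω, V' ω)) (w, i.1)
        - pr P Vr i.1 * pr P' W' w) ?_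
    · by_cases hv : pr P Vr v ≠ 0
      · have := hg ⟨v, hv⟩
        dsimp at this; linarith
      · push_neg at hv
        have h1 : pr P' (fun ω => (W' ω, V' ω)) (w, v) ≤ 0 := by
          calc pr P' (fun ω => (W' ω, V' ω)) (w, v) ≤ pr P' V' v := pr_pair_le_snd _ _ _ _ _
          _ = 0 := by rw [hq v, hv]
        have h2 := pr_nonneg P' (fun ω => (W' ω, V' ω)) (w, v)
        rw [hv]; linarith
    · funext u
      rw [Finset.sum_apply]
      simp only [Pi.smul_apply, smul_eq_mul, Pi.zero_apply]
      have hterm : ∀ i : {v : V // pr P Vr v ≠ 0},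
          (pr P' (fun ω => (W' ω, V' ω)) (w, i.1) - pr P Vr i.1 * pr P' W' w) *
            (pr P (fun ω => (Ur ω, Vr ω)) (u, i.1) / pr P Vr i.1)
          = pr P' (fun ω => (U' ω, W' ω, V' ω)) (u, w, i.1)
            - pr P (fun ω => (Ur ω, Vr ω)) (u, i.1) * pr P' W' w := by
        rintro ⟨v, hv⟩
        dsimp only
        have hmkv := hM u w v
        rw [hq v, hUV u v] at hmkv
        have htr : pr P' (fun ω => (U' ω, W' ω, V' ω)) (u, w, v)
            = pr P (fun ω => (Ur ω, Vr ω)) (u, v) * pr P' (fun ω => (W' ω, V' ω)) (w, v)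
              / pr P Vr v := by
          field_simp
          linarith [hmkv]
        rw [htr]; field_simp
      rw [Finset.sum_congr rfl fun i _ => hterm i]
      rw [sum_subtype_of_zero (fun v => pr P Vr v ≠ 0)
        (fun v => pr P' (fun ω => (U' ω, W' ω, V' ω)) (u, w, v)
            - pr P (fun ω => (Ur ω, Vr ω)) (u, v) * pr P' W' w) ?_]
      · rw [Finset.sum_sub_distrib]
        rw [sum_pr_third P' U' W' V' u w, hI u w, hu u, ← Finset.sum_mul,
          sum_pr_snd P Ur Vr u]
        ring
      · intro v hv
        simp only [ne_eq, not_not] at hv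
        have h1 : pr P' (fun ω => (U' ω, W' ω, V' ω)) (u, w, v) = 0 := by
          have := pr_triple_le_third P' U' W' V' u w v
          rw [hq v, hv] at this
          exact le_antisymm this (pr_nonneg _ _ _)
        have h2 : pr P (fun ω => (Ur ω, Vr ω)) (u, v) = 0 := by
          have := pr_pair_le_snd P Ur Vr u v
          rw [hv] at this
          exact le_antisymm this (pr_nonneg _ _ _)
        simp only [h1, h2]; ring
  intro c b
  rw [pr_swap, key b c, hq c]

noncomputable def theta {V : Type*} (t : V → ℝ) (b : Fin 2) (v : V) : ℝ :=
  if b = 1 then 1/2 + t v else 1/2 - t v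

lemma theta_nonneg {V : Type*} (t : V → ℝ) (hb : ∀ v, |t v| ≤ 1/2) (b : Fin 2) (v : V) :
    0 ≤ theta t b v := by
  have := abs_le.1 (hb v)
  unfold theta; split <;> linarith [this.1, this.2]

lemma theta_sum {V : Type*} (t : V → ℝ) (v : V) : ∑ b : Fin 2, theta t b v = 1 := by
  rw [Fin.sum_univ_two]
  unfold theta
  norm_num

lemma construct {U V : Type} [Fintype U] [DecidableEq U] [Fintype V] [DecidableEq V]
    (p : U → V → ℝ) (hp : ∀ u v, 0 ≤ p u v) (hp1 : ∑ u, ∑ v, p u v = 1)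
    (t : V → ℝ) (hb : ∀ v, |t v| ≤ 1/2)
    (h2 : ∀ u, ∑ v, p u v * t v = 0)
    (v0 : V) (h3 : (∑ u, p u v0) * t v0 ≠ 0) :
    ∃ (n m : ℕ) (P' : FinProb (Fin n)) (U' : Fin n → U) (V' : Fin n → V) (W' : Fin n → Fin 2),
      (∀ u v, pr P' (fun ω => (U' ω, V' ω)) (u, v) = p u v) ∧
      CondIndep P' U' W' V' ∧ Indep P' U' W' ∧ ¬ Indep P' V' W' := by
  classical
  set n := Fintype.card (U × V × Fin 2) with hn
  set e := (Fintype.equivFin (U × V × Fin 2)) with he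
  set w : U × V × Fin 2 → ℝ := fun x => p x.1 x.2.1 * theta t x.2.2 x.2.1 with hw
  have hwnn : ∀ x, 0 ≤ w x := fun x => mul_nonneg (hp _ _) (theta_nonneg t hb _ _)
  have hwsum : ∑ i : Fin n, w (e.symm i) = 1 := by
    rw [Equiv.sum_comp e.symm w]
    rw [Fintype.sum_prod_type]
    calc ∑ u, ∑ y : V × Fin 2, w (u, y)
        = ∑ u, ∑ v, ∑ b, p u v * theta t b v := by
          refine Finset.sum_congr rfl fun u _ => ?_
          rw [Fintype.sum_prod_type]
      _ = ∑ u, ∑ v, p u v := by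
          refine Finset.sum_congr rfl fun u _ => Finset.sum_congr rfl fun v _ => ?_
          rw [← Finset.mul_sum, theta_sum, mul_one]
      _ = 1 := hp1
  set P' : FinProb (Fin n) := ⟨fun i => w (e.symm i), fun i => hwnn _, hwsum⟩ with hP'
  have hpr : ∀ {A : Type} [DecidableEq A] (F : U × V × Fin 2 → A) (a : A),
      pr P' (fun i => F (e.symm i)) a = ∑ x : U × V × Fin 2, (if F x = a then w x else 0) := by
    intro A _ F a
    show ∑ i : Fin n, (if F (e.symm i) = a then w (e.symm i) else 0) = _
    exact Equiv.sum_comp e.symm (fun x => if F x = a then w x else 0)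
  have expand : ∀ (f : U → V → Fin 2 → ℝ),
      ∑ x : U × V × Fin 2, f x.1 x.2.1 x.2.2 = ∑ a, ∑ c, ∑ b, f a c b := by
    intro f
    rw [Fintype.sum_prod_type]
    exact Finset.sum_congr rfl fun a _ => by rw [Fintype.sum_prod_type]
  set U' : Fin n → U := fun i => (e.symm i).1 with hU'
  set V' : Fin n → V := fun i => (e.symm i).2.1 with hV'
  set W' : Fin n → Fin 2 := fun i => (e.symm i).2.2 with hW'
  have prUV : ∀ u v, pr P' (fun i => (U' i, V' i)) (u, v) = p u v := by
    intro u v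
    rw [hpr (fun x => (x.1, x.2.1)) (u, v), expand (fun a c b =>
      if (a, c) = (u, v) then p a c * theta t b c else 0)]
    have : ∀ a c, ∑ b : Fin 2, (if (a, c) = (u, v) then p a c * theta t b c else 0)
        = if (a, c) = (u, v) then p a c else 0 := by
      intro a c
      by_cases h : (a, c) = (u, v)
      · simp only [if_pos h]
        rw [← Finset.mul_sum, theta_sum, mul_one]
      · simp [h]
    simp only [this]
    simp [Prod.ext_iff, ite_and, Finset.sum_ite_eq, Finset.sum_ite_eq']
  have prV : ∀ v, pr P' V' v = ∑ a, p a v := by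
    intro v
    rw [hpr (fun x => x.2.1) v, expand (fun a c b =>
      if c = v then p a c * theta t b c else 0)]
    have : ∀ a c, ∑ b : Fin 2, (if c = v then p a c * theta t b c else 0)
        = if c = v then p a c else 0 := by
      intro a c
      by_cases h : c = v
      · simp only [if_pos h]
        rw [← Finset.mul_sum, theta_sum, mul_one]
      · simp [h]
    simp only [this]
    simp [Finset.sum_ite_eq, Finset.sum_ite_eq']
  have prU : ∀ u, pr P' U' u = ∑ c, p u c := by
    intro u
    rw [hpr (fun x => x.1) u, expand (fun a c b =>
      if a = u then p a c * theta t b c else 0)]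
    have : ∀ a c, ∑ b : Fin 2, (if a = u then p a c * theta t b c else 0)
        = if a = u then p a c else 0 := by
      intro a c
      by_cases h : a = u
      · simp only [if_pos h]
        rw [← Finset.mul_sum, theta_sum, mul_one]
      · simp [h]
    simp only [this]
    simp [Finset.sum_ite_eq, Finset.sum_ite_eq']
  have hQt : ∑ c, (∑ a, p a c) * t c = 0 := by
    calc ∑ c, (∑ a, p a c) * t c = ∑ c, ∑ a, p a c * t c := by
          refine Finset.sum_congr rfl fun c _ => ?_
          rw [Finset.sum_mul]
      _ = ∑ a, ∑ c, p a c * t c := Finset.sum_comm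
      _ = 0 := by simp [h2]
  have hQ1 : ∑ c, (∑ a, p a c) = 1 := by rw [Finset.sum_comm]; exact hp1
  have prW : ∀ b, pr P' W' b = 1/2 := by
    intro b
    rw [hpr (fun x => x.2.2) b, expand (fun a c b' =>
      if b' = b then p a c * theta t b' c else 0)]
    have : ∀ a c, ∑ b' : Fin 2, (if b' = b then p a c * theta t b' c else 0)
        = p a c * theta t b c := by
      intro a c
      simp [Finset.sum_ite_eq']
    simp only [this]
    rw [Finset.sum_comm]
    have : ∀ c, ∑ a, p a c * theta t b c = (∑ a, p a c) * theta t b c := by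
      intro c; rw [Finset.sum_mul]
    simp only [this]
    unfold theta
    split
    · simp only [mul_add]
      rw [Finset.sum_add_distrib, hQt, ← Finset.sum_mul, hQ1]
      norm_num
    · simp only [mul_sub]
      rw [Finset.sum_sub_distrib, hQt, ← Finset.sum_mul, hQ1]
      norm_num
  have prUW : ∀ u b, pr P' (fun i => (U' i, W' i)) (u, b) = (∑ c, p u c) * (1/2) := by
    intro u b
    rw [hpr (fun x => (x.1, x.2.2)) (u, b), expand (fun a c b' =>
      if (a, b') = (u, b) then p a c * theta t b' c else 0)]
    have : ∀ a c, ∑ b' : Fin 2, (if (a, b') = (u, b) then p a c * theta t b' c else 0)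
        = if a = u then p a c * theta t b c else 0 := by
      intro a c
      simp [Prod.ext_iff, ite_and, Finset.sum_ite_eq']
    simp only [this]
    rw [Finset.sum_comm]
    have e2 : ∀ c, ∑ a, (if a = u then p a c * theta t b c else 0) = p u c * theta t b c := by
      intro c; simp [Finset.sum_ite_eq']
    simp only [e2]
    unfold theta
    split
    · simp only [mul_add]
      rw [Finset.sum_add_distrib, h2 u, ← Finset.sum_mul]
      ring
    · simp only [mul_sub]
      rw [Finset.sum_sub_distrib, h2 u, ← Finset.sum_mul]
      ring
  have prWV : ∀ b v, pr P' (fun i => (W' i, V' i)) (b, v) = (∑ a, p a v) * theta t b v := by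
    intro b v
    rw [hpr (fun x => (x.2.2, x.2.1)) (b, v), expand (fun a c b' =>
      if (b', c) = (b, v) then p a c * theta t b' c else 0)]
    have : ∀ a c, ∑ b' : Fin 2, (if (b', c) = (b, v) then p a c * theta t b' c else 0)
        = if c = v then p a c * theta t b c else 0 := by
      intro a c
      simp [Prod.ext_iff, ite_and, Finset.sum_ite_eq']
    simp only [this]
    simp [Finset.sum_ite_eq', Finset.sum_mul]
  have prUWV : ∀ u b v, pr P' (fun i => (U' i, W' i, V' i)) (u, b, v) = p u v * theta t b v := by
    intro u b v
    rw [hpr (fun x => (x.1, x.2.2, x.2.1)) (u, b, v), expand (fun a c b' =>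
      if (a, b', c) = (u, b, v) then p a c * theta t b' c else 0)]
    have : ∀ a c, ∑ b' : Fin 2, (if (a, b', c) = (u, b, v) then p a c * theta t b' c else 0)
        = if a = u ∧ c = v then p a c * theta t b c else 0 := by
      intro a c
      simp [Prod.ext_iff, ite_and, Finset.sum_ite_eq']
    simp only [this]
    simp [ite_and, Finset.sum_ite_eq, Finset.sum_ite_eq']
  refine ⟨n, 2, P', U', V', W', prUV, ?_, ?_, ?_⟩
  · intro a b c
    rw [prV, prUWV, prUV, prWV]
    ring
  · intro a b
    rw [prUW, prU, prW]
  · intro hind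
    have h1 := hind v0 1
    rw [pr_swap, prWV, prV, prW] at h1
    have hth : theta t 1 v0 = 1/2 + t v0 := by unfold theta; simp
    rw [hth] at h1
    apply h3
    nlinarith [h1]


end AuxLemmas

/-- Berger–Yeung weak independence characterization. -/
theorem stmt9 {Ω U V : Type} [Fintype Ω] [Fintype U] [DecidableEq U]
    [Fintype V] [DecidableEq V] (P : FinProb Ω) (Ur : Ω → U) (Vr : Ω → V) :
    (∃ (n m : ℕ) (P' : FinProb (Fin n)) (U' : Fin n → U) (V' : Fin n → V)
        (W' : Fin n → Fin m),
      (∀ u v, pr P' (fun ω => (U' ω, V' ω)) (u, v)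
        = pr P (fun ω => (Ur ω, Vr ω)) (u, v)) ∧
      CondIndep P' U' W' V' ∧ Indep P' U' W' ∧ ¬ Indep P' V' W') ↔
    ¬ LinearIndependent ℝ
      (fun v : {v : V // pr P Vr v ≠ 0} =>
        fun u : U => pr P (fun ω => (Ur ω, Vr ω)) (u, v.1) / pr P Vr v.1) := by
  classical
  constructor
  · rintro ⟨n, m, P', U', V', W', hUV, hM, hI, hN⟩ hLI
    exact hN (forward P Ur Vr P' U' V' W' hUV hM hI hLI)
  · intro hdep
    rw [Fintype.not_linearIndependent_iff] at hdep
    obtain ⟨g, hg0, i0, hgne⟩ := hdep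
    set q : V → ℝ := fun v => pr P Vr v with hqdef
    set d : V → ℝ := fun v => if h : pr P Vr v ≠ 0 then g ⟨v, h⟩ / pr P Vr v else 0 with hd
    set K : ℝ := ∑ v, |d v| with hK
    have hK0 : 0 ≤ K := Finset.sum_nonneg fun v _ => abs_nonneg _
    set ε : ℝ := 1 / (2 * (K + 1)) with hε
    have hεpos : 0 < ε := by positivity
    set t : V → ℝ := fun v => ε * d v with ht
    have hεK : ε * (2 * (K + 1)) = 1 := by
      rw [hε]; field_simp
    have hb : ∀ v, |t v| ≤ 1 / 2 := by
      intro v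
      have h1 : |d v| ≤ K := Finset.single_le_sum (fun v _ => abs_nonneg (d v))
        (Finset.mem_univ v)
      calc |t v| = ε * |d v| := by rw [ht]; simp [abs_mul, abs_of_pos hεpos]
        _ ≤ ε * K := mul_le_mul_of_nonneg_left h1 hεpos.le
        _ ≤ 1 / 2 := by nlinarith [mul_le_mul_of_nonneg_left hK0 hεpos.le]
    have h2 : ∀ u, ∑ v, pr P (fun ω => (Ur ω, Vr ω)) (u, v) * t v = 0 := by
      intro u
      have hsum0 : ∑ i : {v : V // pr P Vr v ≠ 0},
          pr P (fun ω => (Ur ω, Vr ω)) (u, i.1) * d i.1 = 0 := by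
        have heval := congrFun hg0 u
        simp only [Finset.sum_apply, Pi.smul_apply, smul_eq_mul, Pi.zero_apply] at heval
        have hterm : ∀ i : {v : V // pr P Vr v ≠ 0},
            pr P (fun ω => (Ur ω, Vr ω)) (u, i.1) * d i.1
              = g i * (pr P (fun ω => (Ur ω, Vr ω)) (u, i.1) / pr P Vr i.1) := by
          intro i
          simp only [hd]
          rw [dif_pos i.2]
          field_simp
        rw [Finset.sum_congr rfl fun i _ => hterm i]
        exact heval
      have hfull : ∑ v, pr P (fun ω => (Ur ω, Vr ω)) (u, v) * d v = 0 := by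
        rw [← sum_subtype_of_zero (fun v => pr P Vr v ≠ 0)
          (fun v => pr P (fun ω => (Ur ω, Vr ω)) (u, v) * d v) ?_]
        · exact hsum0
        · intro v hv
          simp [hd, hv]
      calc ∑ v, pr P (fun ω => (Ur ω, Vr ω)) (u, v) * t v
          = ε * ∑ v, pr P (fun ω => (Ur ω, Vr ω)) (u, v) * d v := by
            rw [Finset.mul_sum]
            exact Finset.sum_congr rfl fun v _ => by rw [ht]; ring
        _ = 0 := by rw [hfull, mul_zero]
    have h3 : (∑ u, pr P (fun ω => (Ur ω, Vr ω)) (u, i0.1)) * t i0.1 ≠ 0 := by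
      rw [sum_pr_fst P Ur Vr i0.1, ht]
      have hdv : d i0.1 = g i0 / pr P Vr i0.1 := by simp only [hd]; rw [dif_pos i0.2]
      dsimp only
      rw [hdv]
      have hq0 : pr P Vr i0.1 ≠ 0 := i0.2
      field_simp
      exact mul_ne_zero hεpos.ne' hgne
    have hp1 : ∑ u, ∑ v, pr P (fun ω => (Ur ω, Vr ω)) (u, v) = 1 := by
      calc ∑ u, ∑ v, pr P (fun ω => (Ur ω, Vr ω)) (u, v) = ∑ u, pr P Ur u := by
            exact Finset.sum_congr rfl fun u _ => sum_pr_snd P Ur Vr u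
        _ = 1 := sum_pr P Ur
    obtain ⟨n, m, P', U', V', W', hUV, hM, hI, hN⟩ :=
      construct (fun u v => pr P (fun ω => (Ur ω, Vr ω)) (u, v))
        (fun u v => pr_nonneg P _ _) hp1 t hb h2 i0.1 h3
    exact ⟨n, 2, P', U', V', W', hUV, hM, hI, hN⟩
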